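/- Let A(θ) be the 4×4 matrix with rows (0, 4/(3θ), 0, 0), (0, 1/3, 4/(3θ), 0), (0, 0, 2/3, 4/(3θ)), (4/θ, 0, 0, 1), and let D = θ∂_θ + A(θ) act on (ℂ(θ))^4, i.e., D(m) = θ m' + A(θ)m. Then the cyclic vector m = (1,0,0,0)^t satisfies D^4 m + 4 D^3 m + (32/9) D^2 m - (256/(27θ^4)) m = 0. -/

import Mathlib

open Matrix

/-- The connection matrix of the localized Fourier–Laplace transform of the Gauß–Manin system. -/
noncomputable def gmMatrix (θ : ℂ) : Matrix (Fin 4) (Fin 4) ℂ :=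
  !![0, 4 / (3 * θ), 0, 0;
     0, 1 / 3, 4 / (3 * θ), 0;
     0, 0, 2 / 3, 4 / (3 * θ);
     4 / θ, 0, 0, 1]

/-- The operator `D = θ∂_θ + A(θ)` acting on vector-valued functions. -/
noncomputable def Dop (v : ℂ → Fin 4 → ℂ) : ℂ → Fin 4 → ℂ :=
  fun θ => θ • (fun i => deriv (fun t => v t i) θ) + (gmMatrix θ).mulVec (v θ)

noncomputable def f1 : ℂ → Fin 4 → ℂ := fun θ => ![0, 0, 0, 4 / θ ^ 1]
noncomputable def f2 : ℂ → Fin 4 → ℂ := fun θ => ![0, 0, (16/3) / θ ^ 2, 0]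
noncomputable def f3 : ℂ → Fin 4 → ℂ :=
  fun θ => ![0, (64/9) / θ ^ 3, (-64/9) / θ ^ 2, 0]
noncomputable def f4 : ℂ → Fin 4 → ℂ :=
  fun θ => ![(256/27) / θ ^ 4, (-256/9) / θ ^ 3, (256/27) / θ ^ 2, 0]

lemma deriv_cdiv (c : ℂ) (n : ℕ) (θ : ℂ) (hθ : θ ≠ 0) :
    deriv (fun t : ℂ => c / t ^ n) θ = -(n : ℂ) * c / θ ^ (n + 1) := by
  have h1 : (fun t : ℂ => c / t ^ n) = fun t : ℂ => c * t ^ (-(n : ℤ)) := by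
    funext t
    rw [_root_.zpow_neg, zpow_natCast, div_eq_mul_inv]
  have h2 : (-(n : ℤ) - 1) = -((n + 1 : ℕ) : ℤ) := by push_cast; ring
  rw [h1, ((hasDerivAt_zpow (-(n : ℤ)) θ (Or.inl hθ)).const_mul c).deriv, h2,
    _root_.zpow_neg, zpow_natCast, div_eq_mul_inv]
  push_cast
  ring

lemma deriv_vec (a b c d : ℂ → ℂ) (i : Fin 4) (θ : ℂ) :
    deriv (fun t => ![a t, b t, c t, d t] i) θ
      = ![deriv a θ, deriv b θ, deriv c θ, deriv d θ] i := by
  fin_cases i <;> rfl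

lemma Dop_congr (f g : ℂ → Fin 4 → ℂ) (h : ∀ t : ℂ, t ≠ 0 → f t = g t)
    (θ : ℂ) (hθ : θ ≠ 0) : Dop f θ = Dop g θ := by
  have hev : ∀ i : Fin 4, deriv (fun t => f t i) θ = deriv (fun t => g t i) θ := by
    intro i
    apply Filter.EventuallyEq.deriv_eq
    filter_upwards [isOpen_compl_singleton.mem_nhds (by simpa using hθ :
      θ ∈ ({0}ᶜ : Set ℂ))] with t ht
    exact congrFun (h t (by simpa using ht)) i
  simp only [Dop, h θ hθ]
  congr 1
  funext i
  simp [hev i]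

lemma step1 (θ : ℂ) : Dop (fun _ => ![1, 0, 0, 0]) θ = f1 θ := by
  funext i
  fin_cases i <;>
    simp [Dop, f1, gmMatrix, mulVec, dotProduct, Fin.sum_univ_four]

lemma step2 (θ : ℂ) (hθ : θ ≠ 0) : Dop f1 θ = f2 θ := by
  funext i
  fin_cases i <;>
    simp only [Dop, f1, f2, Pi.add_apply, Pi.smul_apply, smul_eq_mul, deriv_vec,
      deriv_cdiv _ _ _ hθ, deriv_const', gmMatrix, mulVec, dotProduct, Fin.sum_univ_four,
      cons_val', cons_val_zero, cons_val_one, head_cons, head_fin_const, cons_val_two,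
      tail_cons, cons_val_three, empty_val', cons_val_fin_one, of_apply, Nat.cast_one,
      Nat.cast_ofNat, Fin.reduceFinMk, Fin.isValue] <;>
    field_simp <;> (try ring) <;> (try field_simp) <;> (try ring)

lemma step3 (θ : ℂ) (hθ : θ ≠ 0) : Dop f2 θ = f3 θ := by
  funext i
  fin_cases i <;>
    simp only [Dop, f2, f3, Pi.add_apply, Pi.smul_apply, smul_eq_mul, deriv_vec,
      deriv_cdiv _ _ _ hθ, deriv_const', gmMatrix, mulVec, dotProduct, Fin.sum_univ_four,
      cons_val', cons_val_zero, cons_val_one, head_cons, head_fin_const, cons_val_two,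
      tail_cons, cons_val_three, empty_val', cons_val_fin_one, of_apply, Nat.cast_one,
      Nat.cast_ofNat, Fin.reduceFinMk, Fin.isValue] <;>
    field_simp <;> (try ring) <;> (try field_simp) <;> (try ring)

lemma step4 (θ : ℂ) (hθ : θ ≠ 0) : Dop f3 θ = f4 θ := by
  funext i
  fin_cases i <;>
    simp only [Dop, f3, f4, Pi.add_apply, Pi.smul_apply, smul_eq_mul, deriv_vec,
      deriv_cdiv _ _ _ hθ, deriv_const', gmMatrix, mulVec, dotProduct, Fin.sum_univ_four,
      cons_val', cons_val_zero, cons_val_one, head_cons, head_fin_const, cons_val_two,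
      tail_cons, cons_val_three, empty_val', cons_val_fin_one, of_apply, Nat.cast_one,
      Nat.cast_ofNat, Fin.reduceFinMk, Fin.isValue] <;>
    field_simp <;> (try ring) <;> (try field_simp) <;> (try ring)

lemma it2 (θ : ℂ) (hθ : θ ≠ 0) : Dop^[2] (fun _ => ![1, 0, 0, 0]) θ = f2 θ := by
  have h : Dop^[2] (fun _ => ![1, 0, 0, 0]) θ = Dop (Dop (fun _ => ![1, 0, 0, 0])) θ := rfl
  rw [h, Dop_congr _ f1 (fun t _ => step1 t) θ hθ, step2 θ hθ]

lemma it3 (θ : ℂ) (hθ : θ ≠ 0) : Dop^[3] (fun _ => ![1, 0, 0, 0]) θ = f3 θ := by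
  have h : Dop^[3] (fun _ => ![1, 0, 0, 0]) θ
      = Dop (Dop^[2] (fun _ => ![1, 0, 0, 0])) θ := rfl
  rw [h, Dop_congr _ f2 it2 θ hθ, step3 θ hθ]

lemma it4 (θ : ℂ) (hθ : θ ≠ 0) : Dop^[4] (fun _ => ![1, 0, 0, 0]) θ = f4 θ := by
  have h : Dop^[4] (fun _ => ![1, 0, 0, 0]) θ
      = Dop (Dop^[3] (fun _ => ![1, 0, 0, 0])) θ := rfl
  rw [h, Dop_congr _ f3 it3 θ hθ, step4 θ hθ]

/-- The cyclic vector `m = (1,0,0,0)ᵗ` satisfies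
`D⁴m + 4D³m + (32/9)D²m - (256/(27θ⁴))m = 0`. -/
theorem cyclic_vector_relation :
    ∀ θ : ℂ, θ ≠ 0 →
      (Dop^[4] (fun _ => ![1, 0, 0, 0])) θ
        + (4 : ℂ) • (Dop^[3] (fun _ => ![1, 0, 0, 0])) θ
        + ((32 : ℂ) / 9) • (Dop^[2] (fun _ => ![1, 0, 0, 0])) θ
        - ((256 : ℂ) / (27 * θ ^ 4)) • (![1, 0, 0, 0] : Fin 4 → ℂ) = 0 := by
  intro θ hθ
  rw [it4 θ hθ, it3 θ hθ, it2 θ hθ]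
  funext i
  fin_cases i <;>
    simp only [f2, f3, f4, Pi.add_apply, Pi.sub_apply, Pi.smul_apply, smul_eq_mul,
      Pi.zero_apply, cons_val', cons_val_zero, cons_val_one, head_cons, cons_val_two,
      tail_cons, cons_val_three, empty_val', cons_val_fin_one, Fin.reduceFinMk, Fin.isValue] <;>
    field_simp <;> (try ring) <;> (try field_simp) <;> (try ring)
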